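/- arXiv:math/0212064 — 4 statements merged into one kernel-verified Lean document; each statement's English description precedes it below -/
import Mathlib

section
/- Let f : G → H be a graph homomorphism between simple graphs. If G contains a cycle of odd length n, then H contains a cycle of odd length at most n. -/
open SimpleGraph Walk

/-- Any odd closed walk contains an odd cycle of at most its length. -/
lemma exists_odd_cycle_of_odd_closed_walk {W : Type*} {H : SimpleGraph W} :
    ∀ (n : ℕ) {u : W} (c : H.Walk u u), c.length = n → Odd n →
    ∃ (x : W) (d : H.Walk x x), d.IsCycle ∧ Odd d.length ∧ d.length ≤ n := by
  classical
  intro n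
  induction n using Nat.strong_induction_on with
  | _ n ih =>
    intro u c hlen hodd
    cases c with
    | nil => simp [← hlen] at hodd
    | @cons _ v _ h p =>
      by_cases hcy : (Walk.cons h p).IsCycle
      · exact ⟨u, Walk.cons h p, hcy, by rw [hlen] at *; exact ⟨hodd, le_rfl⟩⟩
      rw [Walk.cons_isCycle_iff] at hcy
      by_cases hp : p.IsPath
      · have he : s(u, v) ∈ p.edges := by
          by_contra hne; exact hcy ⟨hp, hne⟩
        cases p with
        | nil => simp at he
        | @cons _ w₂ _ h₂ p₂ =>
          rw [Walk.cons_isPath_iff] at hp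
          rw [Walk.edges_cons, List.mem_cons] at he
          rcases he with he | he
          · rw [Sym2.eq_iff] at he
            rcases he with ⟨h1, h2⟩ | ⟨h1, h2⟩
            · exact absurd h1 h.ne
            · subst h1
              have : p₂ = Walk.nil := Walk.isPath_iff_eq_nil.mp hp.1
              subst this
              simp [Walk.length_cons] at hlen
              rw [← hlen] at hodd
              exact absurd hodd (by decide)
          · exact absurd (Walk.snd_mem_support_of_mem_edges p₂ he) hp.2
      · -- p is not a path: find a repeated vertex and split
        rw [Walk.isPath_def] at hp
        obtain ⟨x, hdup⟩ := List.exists_duplicate_iff_not_nodup.mpr hp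
        have hx : x ∈ p.support := hdup.mem
        have hcount : 2 ≤ p.support.count x := List.duplicate_iff_two_le_count.mp hdup
        have hspec : (p.takeUntil x hx).append (p.dropUntil x hx) = p := p.take_spec hx
        have hcount1 : (p.takeUntil x hx).support.count x = 1 :=
          p.count_support_takeUntil_eq_one hx
        have hxrest : x ∈ (p.dropUntil x hx).support.tail := by
          have hsupp : (p.takeUntil x hx).support ++ (p.dropUntil x hx).support.tail
              = p.support := by
            rw [← Walk.support_append, hspec]
          rw [← List.count_pos_iff]
          have h2 := hsupp.symm ▸ hcount
          rw [List.count_append, hcount1] at h2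
          omega
        have hnn : ¬ (p.dropUntil x hx).Nil := by
          rw [Walk.not_nil_iff_lt_length]
          have h3 : (p.dropUntil x hx).support.tail ≠ [] := List.ne_nil_of_mem hxrest
          have h4 := (p.dropUntil x hx).length_support
          rcases Nat.eq_zero_or_pos (p.dropUntil x hx).length with h5 | h5
          · exfalso
            apply h3
            have : (p.dropUntil x hx).support.tail.length = 0 := by
              rw [List.length_tail, h4, h5]
            exact List.eq_nil_of_length_eq_zero this
          · exact h5
        obtain ⟨y, h', r, hrq⟩ := Walk.not_nil_iff.mp hnn
        rw [hrq] at hxrest hspec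
        have hxr : x ∈ r.support := by simpa using hxrest
        -- the two closed subwalks
        have hlr : (r.takeUntil x hxr).length + (r.dropUntil x hxr).length = r.length := by
          have := congr_arg Walk.length (r.take_spec hxr)
          rwa [Walk.length_append] at this
        have hlp : (p.takeUntil x hx).length + (r.length + 1) = p.length := by
          have := congr_arg Walk.length hspec
          rwa [Walk.length_append, Walk.length_cons] at this
        have hn : p.length + 1 = n := by rw [← hlen, Walk.length_cons]
        have hql : (Walk.cons h' (r.takeUntil x hxr) : H.Walk x x).length
            = (r.takeUntil x hxr).length + 1 := Walk.length_cons _ _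
        have hc2l : (Walk.cons h ((p.takeUntil x hx).append (r.dropUntil x hxr))
            : H.Walk u u).length = (p.takeUntil x hx).length + (r.dropUntil x hxr).length + 1 := by
          rw [Walk.length_cons, Walk.length_append]
        set q : H.Walk x x := Walk.cons h' (r.takeUntil x hxr)
        set c2 : H.Walk u u := Walk.cons h ((p.takeUntil x hx).append (r.dropUntil x hxr))
        have hsum : q.length + c2.length = n := by omega
        by_cases hqodd : Odd q.length
        · obtain ⟨z, d, hd1, hd2, hd3⟩ := ih q.length (by omega) q rfl hqodd
          exact ⟨z, d, hd1, hd2, by omega⟩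
        · have hc2odd : Odd c2.length := by
            rw [Nat.not_odd_iff_even] at hqodd
            rcases Nat.even_or_odd c2.length with he | ho
            · exfalso
              have : Even (q.length + c2.length) := hqodd.add he
              rw [hsum] at this
              exact (Nat.not_odd_iff_even.mpr this) hodd
            · exact ho
          obtain ⟨z, d, hd1, hd2, hd3⟩ := ih c2.length (by omega) c2 rfl hc2odd
          exact ⟨z, d, hd1, hd2, by omega⟩

/-- If there is a graph homomorphism `f : G →g H` and `G` contains a
cycle of odd length `n`, then `H` contains a cycle of odd length at most `n`. -/
theorem hom_odd_cycle {V W : Type*} {G : SimpleGraph V} {H : SimpleGraph W}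
    (f : G →g H) {v : V} (w : G.Walk v v) (hc : w.IsCycle) (hodd : Odd w.length) :
    ∃ (u : W) (d : H.Walk u u), d.IsCycle ∧ Odd d.length ∧ d.length ≤ w.length := by
  have := exists_odd_cycle_of_odd_closed_walk (w.map f).length (w.map f) rfl
    (by rwa [Walk.length_map])
  rw [Walk.length_map] at this
  exact this
end

section
/- Let f : ℕ → ℕ, let X be a simple graph on a vertex set V, and let c be a function assigning to every edge of X a natural number. For n ∈ ℕ let X_n be the spanning subgraph of X consisting of the edges e with c(e) = n, and for r ∈ ℕ let Y_r be the spanning subgraph consisting of the edges e with c(e) ≥ r. Suppose that (a) for every n the graph X_n contains no cycle, and (b) for every r the graph Y_r contains no cycle of odd length at most f(r). Then for every r, every induced subgraph of X on at most f(r) vertices admits a proper coloring with 2^{r+1} colors. -/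
open SimpleGraph Walk

private lemma path_edge_length_one {W : Type*} {G : SimpleGraph W} {y v : W}
    (p : G.Walk y v) (hp : p.IsPath) (hvy : v ≠ y) (he : s(v, y) ∈ p.edges) :
    p.length = 1 := by
  cases p with
  | nil => simp at he
  | @cons _ z _ h' p' =>
    rw [Walk.edges_cons, List.mem_cons] at he
    rcases he with he | he
    · have hz : z = v := by
        rw [Sym2.eq_iff] at he
        rcases he with ⟨hv, _⟩ | ⟨hv, hy⟩
        · exact absurd hv hvy
        · exact hv.symm
      subst hz
      have : p' = Walk.nil := by
        rw [← Walk.isPath_iff_eq_nil]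
        exact ((Walk.cons_isPath_iff _ _).mp hp).1
      subst this
      simp
    · exfalso
      have : y ∈ p'.support := Walk.snd_mem_support_of_mem_edges p' he
      exact ((Walk.cons_isPath_iff _ _).mp hp).2 this

private lemma odd_cycle_of_odd_closed_walk {W : Type*} {G : SimpleGraph W} :
    ∀ n (v : W) (w : G.Walk v v), w.length = n → Odd n →
      ∃ (u : W) (p : G.Walk u u), p.IsCycle ∧ Odd p.length := by
  classical
  intro n
  induction n using Nat.strong_induction_on with
  | _ n ih =>
    intro v w hlen hodd
    by_cases hd : w.support.tail.Nodup
    · -- w is almost a cycle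
      cases w with
      | nil =>
        exfalso
        rw [Nat.odd_iff, ← hlen] at hodd
        simp at hodd
      | @cons _ y _ h p =>
        have hps : p.support.Nodup := by simpa using hd
        have hp : p.IsPath := Walk.IsPath.mk' hps
        by_cases he : s(v, y) ∈ p.edges
        · have h1 : p.length = 1 := path_edge_length_one p hp h.ne he
          exfalso
          rw [Walk.length_cons, h1] at hlen
          rw [Nat.odd_iff, ← hlen] at hodd
          omega
        · exact ⟨v, Walk.cons h p, (Walk.cons_isCycle_iff p h).mpr ⟨hp, he⟩,
            hlen ▸ hodd⟩
    · -- duplicate vertex in the tail: split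
      obtain ⟨x, hx2⟩ : ∃ x, ¬ w.support.tail.count x ≤ 1 := by
        by_contra hall
        push_neg at hall
        exact hd (List.nodup_iff_count_le_one.mpr fun x => by
          have := hall x; omega)
      have hx2' : 2 ≤ w.support.tail.count x := by omega
      have hxmem : x ∈ w.support := by
        apply List.mem_of_mem_tail
        exact List.count_pos_iff.mp (by omega)
      obtain ⟨q, hqlen, hqcount⟩ :
          ∃ q : G.Walk x x, q.length = n ∧ 2 ≤ q.support.tail.count x := by
        refine ⟨w.rotate x hxmem, ?_, ?_⟩
        · rw [Walk.rotate, Walk.length_append, Nat.add_comm,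
            ← Walk.length_append, Walk.take_spec, hlen]
        · have hperm : List.Perm (w.rotate x hxmem).support.tail w.support.tail :=
            (Walk.support_rotate w x hxmem).perm
          rw [hperm.count_eq]; exact hx2'
      cases q with
      | nil =>
        exfalso
        simp at hqlen
        rw [Nat.odd_iff, ← hqlen] at hodd
        simp at hodd
      | @cons _ y _ h2 p2 =>
        have hcount : 2 ≤ p2.support.count x := by simpa using hqcount
        have hxp2 : x ∈ p2.support := List.count_pos_iff.mp (by omega)
        set t := p2.takeUntil x hxp2 with ht
        set d := p2.dropUntil x hxp2 with hdd
        have hspec : t.append d = p2 := p2.take_spec hxp2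
        have hcnt1 : t.support.count x = 1 := p2.count_support_takeUntil_eq_one hxp2
        clear_value t d
        have hlens : t.length + d.length = p2.length := by
          rw [← Walk.length_append, hspec]
        have hdpos : 1 ≤ d.length := by
          by_contra hdl
          have hd0 : d.length = 0 := by omega
          have : d.support.tail = [] := by
            have := d.length_support
            rw [hd0] at this
            cases hsup : d.support with
            | nil => simp [hsup] at this
            | cons a l => rw [hsup] at this; simp at this; simp [this]
          have hsplit : p2.support.count x = t.support.count x + d.support.tail.count x := by
            rw [← hspec, Walk.support_append, List.count_append]
          rw [hsplit, hcnt1, this] at hcount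
          simp at hcount
        have hsum : (Walk.cons h2 t).length + d.length = n := by
          have e1 : (Walk.cons h2 t).length = t.length + 1 := Walk.length_cons _ _
          have e2 : (Walk.cons h2 p2).length = p2.length + 1 := Walk.length_cons _ _
          omega
        have : Odd (Walk.cons h2 t).length ∨ Odd d.length := by
          rcases Nat.even_or_odd (Walk.cons h2 t).length with he | ho
          · right
            rcases Nat.even_or_odd d.length with he2 | ho2
            · exfalso
              have : Even n := by rw [← hsum]; exact he.add he2
              exact (Nat.not_even_iff_odd.mpr hodd) this
            · exact ho2
          · left; exact ho
        rcases this with ho | ho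
        · exact ih (Walk.cons h2 t).length
            (hsum ▸ Nat.lt_add_of_pos_right hdpos) x (Walk.cons h2 t) rfl ho
        · have hpos : 0 < (Walk.cons h2 t).length := by
            rw [Walk.length_cons]; omega
          exact ih d.length (hsum ▸ Nat.lt_add_of_pos_left hpos) x d rfl ho

private lemma coloring_of_no_odd_cycle {W : Type*} (G : SimpleGraph W)
    (h : ∀ (v : W) (p : G.Walk v v), p.IsCycle → ¬ Odd p.length) :
    Nonempty (G.Coloring Bool) := by
  classical
  have hreach : ∀ v : W, G.Reachable v (G.connectedComponentMk v).out := by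
    intro v
    exact (SimpleGraph.ConnectedComponent.eq.mp
      ((G.connectedComponentMk v).out_eq)).symm
  refine ⟨SimpleGraph.Coloring.mk
    (fun v => decide ((hreach v).some.length % 2 = 0)) ?_⟩
  intro a b hab heq
  have hcomp : G.connectedComponentMk a = G.connectedComponentMk b :=
    SimpleGraph.ConnectedComponent.sound hab.reachable
  set oa := (G.connectedComponentMk a).out
  have hob : (G.connectedComponentMk b).out = oa := by rw [← hcomp]
  set pa := (hreach a).some
  set pb := (hreach b).some
  have hpar : pa.length % 2 = pb.length % 2 := by
    have heq' := heq
    simp only [decide_eq_decide] at heq'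
    rcases Nat.mod_two_eq_zero_or_one pa.length with h1 | h1 <;>
      rcases Nat.mod_two_eq_zero_or_one pb.length with h2 | h2 <;>
      simp [h1, h2] at heq' ⊢
  let w : G.Walk oa oa := pa.reverse.append (Walk.cons hab (pb.copy rfl hob))
  have hwlen : w.length = pa.length + 1 + pb.length := by
    simp only [w, Walk.length_append, Walk.length_cons, Walk.length_reverse,
      Walk.length_copy]
    omega
  have hwodd : Odd w.length := by
    rw [hwlen, Nat.odd_iff]
    omega
  obtain ⟨u, p, hcyc, hoddp⟩ :=
    odd_cycle_of_odd_closed_walk w.length oa w rfl hwodd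
  exact h u p hcyc hoddp

/-- Let `c` assign a natural number to each edge of `X`.  Let `Xn n`
be the spanning subgraph of edges with color `n` and `Yr r` the spanning subgraph
of edges with color `≥ r`.  If every `Xn n` is acyclic and `Yr r` has no odd cycle
of length at most `f r`, then every induced subgraph of `X` on at most `f r`
vertices is `2 ^ (r + 1)`-colorable. -/
theorem induced_subgraph_colorable {V : Type*} (f : ℕ → ℕ) (X : SimpleGraph V)
    (c : Sym2 V → ℕ)
    (Xn : ℕ → SimpleGraph V)
    (hXn : ∀ n x y, (Xn n).Adj x y ↔ X.Adj x y ∧ c s(x, y) = n)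
    (Yr : ℕ → SimpleGraph V)
    (hYr : ∀ r x y, (Yr r).Adj x y ↔ X.Adj x y ∧ r ≤ c s(x, y))
    (hacyclic : ∀ n (v : V) (w : (Xn n).Walk v v), ¬ w.IsCycle)
    (hodd : ∀ r (v : V) (w : (Yr r).Walk v v),
      w.IsCycle → Odd w.length → f r < w.length) :
    ∀ (r : ℕ) (S : Finset V), S.card ≤ f r →
      (X.induce (S : Set V)).Colorable (2 ^ (r + 1)) := by
  classical
  intro r S hS
  set W := ((S : Set V) : Type _)
  -- the graph of edges with color `n`, restricted to `S`
  let Gn : ℕ → SimpleGraph W := fun n =>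
    { Adj := fun a b => X.Adj a.1 b.1 ∧ c s(a.1, b.1) = n
      symm := by
        constructor
        intro a b ⟨h1, h2⟩
        exact ⟨h1.symm, by rwa [Sym2.eq_swap]⟩
      loopless := by constructor; intro a ⟨h1, _⟩; exact X.irrefl h1 }
  -- the graph of edges with color `≥ r`, restricted to `S`
  let Gr : SimpleGraph W :=
    { Adj := fun a b => X.Adj a.1 b.1 ∧ r ≤ c s(a.1, b.1)
      symm := by
        constructor
        intro a b ⟨h1, h2⟩
        exact ⟨h1.symm, by rwa [Sym2.eq_swap]⟩
      loopless := by constructor; intro a ⟨h1, _⟩; exact X.irrefl h1 }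
  have hGn : ∀ n, Nonempty ((Gn n).Coloring Bool) := by
    intro n
    apply coloring_of_no_odd_cycle
    intro v p hcyc _
    let F : Gn n →g Xn n :=
      ⟨fun a => a.1, fun {a b} hab => (hXn n a.1 b.1).mpr ⟨hab.1, hab.2⟩⟩
    exact hacyclic n v.1 (p.map F)
      (((Walk.map_isCycle_iff_of_injective Subtype.val_injective)).mpr hcyc)
  have hGr : Nonempty (Gr.Coloring Bool) := by
    apply coloring_of_no_odd_cycle
    intro v p hcyc hoddp
    let F : Gr →g Yr r :=
      ⟨fun a => a.1, fun {a b} hab => (hYr r a.1 b.1).mpr ⟨hab.1, hab.2⟩⟩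
    have hlt : f r < p.length := by
      have := hodd r v.1 (p.map F)
        (((Walk.map_isCycle_iff_of_injective Subtype.val_injective)).mpr hcyc)
        (by rwa [Walk.length_map])
      rwa [Walk.length_map] at this
    have hle : p.length ≤ S.card := by
      have hnd : p.support.tail.Nodup := hcyc.support_nodup
      have := hnd.length_le_card
      have hlen : p.support.tail.length = p.length := by
        have := p.length_support
        cases hsup : p.support with
        | nil => simp [hsup] at this
        | cons a l =>
          rw [hsup] at this
          simp at this ⊢
          omega
      rw [hlen] at this
      have hcard : Fintype.card W = S.card := by simp [W]
      omega
    omega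
  obtain ⟨c0⟩ := hGr
  let cn : ∀ n : ℕ, (Gn n).Coloring Bool := fun n => (hGn n).some
  let C : (X.induce (S : Set V)).Coloring (Bool × (Fin r → Bool)) :=
    SimpleGraph.Coloring.mk (fun a => (c0 a, fun i => cn i.1 a)) (by
      intro a b hab heq
      have hXab : X.Adj a.1 b.1 := hab
      by_cases hr : r ≤ c s(a.1, b.1)
      · have : Gr.Adj a b := ⟨hXab, hr⟩
        exact c0.valid this (congrArg Prod.fst heq)
      · push_neg at hr
        have hadj : (Gn (c s(a.1, b.1))).Adj a b := ⟨hXab, rfl⟩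
        have := congrFun (congrArg Prod.snd heq) ⟨c s(a.1, b.1), hr⟩
        exact (cn (c s(a.1, b.1))).valid hadj this)
  have hcard : Fintype.card (Bool × (Fin r → Bool)) = 2 ^ (r + 1) := by
    simp [pow_succ, Nat.mul_comm]
  exact (C.colorable).mono (le_of_eq hcard)
end

section
/- Let X be a simple graph on a vertex type W and let Z be a simple graph on a vertex type S. Suppose that for every finite subset s of S there exists a simple graph T on s such that (i) any two vertices of s adjacent in Z are adjacent in T, and (ii) T is isomorphic to an induced subgraph of X, i.e., there is an injection φ : s → W such that two vertices u, v ∈ s are adjacent in T iff φ(u) and φ(v) are adjacent in X. Then there exists a simple graph Z' on S with Z ≤ Z' (every edge of Z is an edge of Z') such that every finite induced subgraph of Z' is isomorphic to an induced subgraph of X, i.e., for every finite s ⊆ S there is an injection φ : s → W with u, v ∈ s adjacent in Z' iff φ(u), φ(v) adjacent in X. -/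
/-- If for every finite `s ⊆ S` there is a graph `T` on `s`
containing all edges of `Z` restricted to `s` and isomorphic to an induced
subgraph of `X`, then there is a graph `Z' ≥ Z` on `S` all of whose finite
induced subgraphs are isomorphic to induced subgraphs of `X`. -/
theorem exists_supergraph_with_induced_subgraphs {W S : Type*}
    (X : SimpleGraph W) (Z : SimpleGraph S)
    (happ : ∀ s : Finset S, ∃ T : SimpleGraph {x // x ∈ s},
      (∀ u v : {x // x ∈ s}, Z.Adj u v → T.Adj u v) ∧
      ∃ φ : {x // x ∈ s} → W, Function.Injective φ ∧
        ∀ u v : {x // x ∈ s}, T.Adj u v ↔ X.Adj (φ u) (φ v)) :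
    ∃ Z' : SimpleGraph S, Z ≤ Z' ∧
      ∀ s : Finset S, ∃ φ : {x // x ∈ s} → W, Function.Injective φ ∧
        ∀ u v : {x // x ∈ s}, Z'.Adj u v ↔ X.Adj (φ u) (φ v) := by
  classical
  choose T hT φ hφinj hφ using happ
  obtain ⟨U, hU⟩ : ∃ U : Ultrafilter (Finset S), (U : Filter (Finset S)) ≤ Filter.atTop :=
    ⟨Ultrafilter.of Filter.atTop, Ultrafilter.of_le _⟩
  set A : S → S → Set (Finset S) := fun u v =>
    {t | ∃ (hu : u ∈ t) (hv : v ∈ t), (T t).Adj ⟨u, hu⟩ ⟨v, hv⟩} with hA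
  have hAsymm : ∀ u v, A u v = A v u := by
    intro u v
    ext t
    constructor
    · rintro ⟨hu, hv, h⟩; exact ⟨hv, hu, h.symm⟩
    · rintro ⟨hv, hu, h⟩; exact ⟨hu, hv, h.symm⟩
  refine ⟨⟨fun u v => A u v ∈ U, ?_, ?_⟩, ?_, ?_⟩
  · refine ⟨fun u v h => ?_⟩
    rwa [hAsymm v u]
  · refine ⟨fun u h => ?_⟩
    obtain ⟨t, hu, hv, hadj⟩ := Filter.nonempty_of_mem h
    have : (⟨u, hu⟩ : {x // x ∈ t}) = ⟨u, hv⟩ := Subtype.ext rfl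
    rw [this] at hadj
    exact (T t).loopless.irrefl _ hadj
  · intro u v h
    refine hU (Filter.mem_of_superset (Filter.mem_atTop ({u, v} : Finset S)) ?_)
    intro t ht
    have hu : u ∈ t := ht (Finset.mem_insert_self _ _)
    have hv : v ∈ t := ht (Finset.mem_insert_of_mem (Finset.mem_singleton_self _))
    exact ⟨hu, hv, hT t ⟨u, hu⟩ ⟨v, hv⟩ h⟩
  · intro s
    set B : S → S → Set (Finset S) := fun u v => if A u v ∈ U then A u v else (A u v)ᶜ with hB
    have hBmem : ∀ u v, B u v ∈ U := by
      intro u v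
      by_cases h : A u v ∈ U
      · simp [hB, h]
      · simp only [hB, if_neg h]
        exact Ultrafilter.compl_mem_iff_notMem.mpr h
    have hmem : ({t : Finset S | s ≤ t} ∩ ⋂ u ∈ s, ⋂ v ∈ s, B u v) ∈ U := by
      refine Filter.inter_mem (hU (Filter.mem_atTop s)) ?_
      rw [Filter.biInter_finset_mem]
      intro u _
      rw [Filter.biInter_finset_mem]
      intro v _
      exact hBmem u v
    obtain ⟨t, hts, htB⟩ := Filter.nonempty_of_mem hmem
    have hsub : ∀ x : {x // x ∈ s}, (x : S) ∈ t := fun x => hts x.2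
    refine ⟨fun x => φ t ⟨x, hsub x⟩, ?_, ?_⟩
    · intro x y hxy
      have h2 : ((⟨x, hsub x⟩ : {a // a ∈ t}) : S) = ((⟨y, hsub y⟩ : {a // a ∈ t}) : S) :=
        congrArg Subtype.val (hφinj t hxy)
      exact Subtype.ext h2
    · intro u v
      have htBuv : t ∈ B (u : S) (v : S) := by
        have h1 := Set.mem_iInter₂.mp htB (u : S) u.2
        exact Set.mem_iInter₂.mp h1 (v : S) v.2
      rw [← hφ t ⟨u, hsub u⟩ ⟨v, hsub v⟩]
      show A (u : S) (v : S) ∈ U ↔ _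
      constructor
      · intro h
        rw [hB] at htBuv
        simp only [if_pos h] at htBuv
        obtain ⟨hu, hv, hadj⟩ := htBuv
        exact hadj
      · intro hadj
        by_contra h
        rw [hB] at htBuv
        simp only [if_neg h] at htBuv
        exact htBuv ⟨hsub u, hsub v, hadj⟩
end

section
/- Let S be a type and suppose that for every finite subset s of S we are given a nonempty set A_s of simple graphs on the vertex set s, such that the family is closed under restriction: if T ∈ A_s and s' ⊆ s, then the induced restriction of T to s' belongs to A_{s'}. Then there exists a simple graph Z' on S such that for every finite subset s of S the induced restriction of Z' to s belongs to A_s. -/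
open CategoryTheory

private instance simpleGraph_finite {V : Type*} [Finite V] : Finite (SimpleGraph V) :=
  Finite.of_injective SimpleGraph.Adj fun _ _ h => SimpleGraph.ext h

/-- Rado selection principle for graphs: Suppose that for every
finite `s ⊆ S` we are given a nonempty set `A s` of graphs on `s`, closed under
induced restriction.  Then there is a graph `Z'` on `S` whose restriction to each
finite `s` lies in `A s`. -/
theorem rado_selection_graphs {S : Type*}
    (A : ∀ s : Finset S, Set (SimpleGraph {x // x ∈ s}))
    (hne : ∀ s : Finset S, (A s).Nonempty)
    (hclosed : ∀ (s : Finset S), ∀ T ∈ A s, ∀ (s' : Finset S) (hss : s' ⊆ s),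
      T.comap (fun x : {y // y ∈ s'} => (⟨x.1, hss x.2⟩ : {y // y ∈ s})) ∈ A s') :
    ∃ Z' : SimpleGraph S, ∀ s : Finset S,
      Z'.comap (fun x : {y // y ∈ s} => (x : S)) ∈ A s := by
  classical
  let F : (Finset S)ᵒᵖ ⥤ Type _ :=
    { obj := fun s => {T : SimpleGraph {x // x ∈ s.unop} // T ∈ A s.unop}
      map := fun {s t} f => TypeCat.ofHom fun T =>
        ⟨T.1.comap (fun x : {y // y ∈ t.unop} => ⟨x.1, leOfHom f.unop x.2⟩),
         hclosed s.unop T.1 T.2 t.unop (leOfHom f.unop)⟩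
      map_id := by intro s; rfl
      map_comp := by intro s t r f g; rfl }
  haveI : ∀ j : (Finset S)ᵒᵖ, Finite (F.obj j) := fun j => by
    dsimp [F]; infer_instance
  haveI : ∀ j : (Finset S)ᵒᵖ, Nonempty (F.obj j) := fun j => by
    obtain ⟨T, hT⟩ := hne j.unop
    exact ⟨⟨T, hT⟩⟩
  obtain ⟨u, hu⟩ := nonempty_sections_of_finite_cofiltered_system F
  set v : ∀ s : Finset S, SimpleGraph {x // x ∈ s} :=
    fun s => (u (Opposite.op s)).1 with hv
  have hcompat : ∀ (s s' : Finset S) (h : s' ⊆ s),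
      (v s).comap (fun x : {y // y ∈ s'} => (⟨x.1, h x.2⟩ : {y // y ∈ s})) = v s' := by
    intro s s' h
    have := hu ((homOfLE h).op : Opposite.op s ⟶ Opposite.op s')
    exact congrArg Subtype.val this
  have key : ∀ (s s' : Finset S) (h : s' ⊆ s) (x y : S)
      (hx : x ∈ s') (hy : y ∈ s'),
      (v s').Adj ⟨x, hx⟩ ⟨y, hy⟩ ↔ (v s).Adj ⟨x, h hx⟩ ⟨y, h hy⟩ := by
    intro s s' h x y hx hy
    rw [← hcompat s s' h]
    rfl
  refine ⟨{ Adj := fun x y => ∀ (t : Finset S) (hx : x ∈ t) (hy : y ∈ t),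
              (v t).Adj ⟨x, hx⟩ ⟨y, hy⟩
            symm := ⟨fun x y hxy t hy hx => ((v t).symm.symm _ _ (hxy t hx hy))⟩
            loopless := ⟨fun x hx => (v {x}).loopless.irrefl _
              (hx {x} (Finset.mem_singleton_self x) (Finset.mem_singleton_self x))⟩ },
         ?_⟩
  intro s
  have : (SimpleGraph.comap (fun x : {y // y ∈ s} => (x : S))
      { Adj := fun x y => ∀ (t : Finset S) (hx : x ∈ t) (hy : y ∈ t),
          (v t).Adj ⟨x, hx⟩ ⟨y, hy⟩
        symm := ⟨fun x y hxy t hy hx => ((v t).symm.symm _ _ (hxy t hx hy))⟩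
        loopless := ⟨fun x hx => (v {x}).loopless.irrefl _
          (hx {x} (Finset.mem_singleton_self x) (Finset.mem_singleton_self x))⟩ }) = v s := by
    ext ⟨x, hx⟩ ⟨y, hy⟩
    constructor
    · intro hadj
      exact hadj s hx hy
    · intro hadj t hxt hyt
      have h1 : (v s).Adj ⟨x, hx⟩ ⟨y, hy⟩ ↔ (v (s ∪ t)).Adj
          ⟨x, Finset.mem_union_left t hx⟩ ⟨y, Finset.mem_union_left t hy⟩ :=
        key (s ∪ t) s Finset.subset_union_left x y hx hy
      have h2 : (v t).Adj ⟨x, hxt⟩ ⟨y, hyt⟩ ↔ (v (s ∪ t)).Adj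
          ⟨x, Finset.mem_union_right s hxt⟩ ⟨y, Finset.mem_union_right s hyt⟩ :=
        key (s ∪ t) t Finset.subset_union_right x y hxt hyt
      exact h2.mpr (h1.mp hadj)
  rw [this]
  exact (u (Opposite.op s)).2
end
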